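/- Uniqueness of the Stinespring construction for Hilbert modules: Let Φ : X → L(H,K) be a completely positive map on a full Hilbert A-module X, and suppose (π_i, H_i, K_i, V_i, W_i) for i = 1,2 are two tuples where π_i : X → L(H_i,K_i) is a representation of X, V_i ∈ L(H,H_i), W_i : K → K_i is a coisometry, Φ(x) = W_i* π_i(x) V_i for all x, [π_i(X)V_i H] = K_i, and [π_i(X)* W_i K] = H_i. Then there exist unitaries U₁ : H₁ → H₂ and U₂ : K₁ → K₂ with U₂ π₁(x) = π₂(x) U₁ for all x ∈ X, V₂ = U₁ V₁, and W₂ = U₂ W₁. -/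

import Mathlib

noncomputable section

open ContinuousLinearMap

/-- An element of the form `star c * c` (positivity in a star ring). -/
def StarPos {B : Type*} [Mul B] [Star B] (b : B) : Prop := ∃ c : B, b = star c * c

/-- Complete positivity of a `ℂ`-linear map between star rings. -/
def IsCPMap {A B : Type*} [NonUnitalRing A] [StarRing A] [Module ℂ A]
    [NonUnitalRing B] [StarRing B] [Module ℂ B] (φ : A →ₗ[ℂ] B) : Prop :=
  ∀ (n : ℕ) (M : Matrix (Fin n) (Fin n) A), StarPos M → StarPos (M.map ⇑φ)

open scoped InnerProductSpace

/-- Two continuous linear maps agreeing on a set with dense span are equal. -/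
lemma clm_ext_dense {E F : Type*} [NormedAddCommGroup E] [NormedSpace ℂ E]
    [NormedAddCommGroup F] [NormedSpace ℂ F]
    {s : Set E} (hs : (Submodule.span ℂ s).topologicalClosure = ⊤)
    {f g : E →L[ℂ] F} (h : ∀ w ∈ s, f w = g w) : f = g := by
  ext v
  have hker : Submodule.span ℂ s ≤ LinearMap.ker ((f - g : E →L[ℂ] F) : E →ₗ[ℂ] F) := by
    rw [Submodule.span_le]
    intro w hw
    simp [LinearMap.mem_ker, h w hw]
  have hclosed : IsClosed ((LinearMap.ker ((f - g : E →L[ℂ] F) : E →ₗ[ℂ] F) : Submodule ℂ E) : Set E) :=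
    ContinuousLinearMap.isClosed_ker (f - g)
  have := Submodule.topologicalClosure_minimal _ hker hclosed
  rw [hs] at this
  have hv : v ∈ LinearMap.ker ((f - g : E →L[ℂ] F) : E →ₗ[ℂ] F) := this Submodule.mem_top
  have := LinearMap.mem_ker.mp hv
  simpa [sub_eq_zero] using this

/-- Two vectors with equal inner products against a set with dense span are equal. -/
lemma ext_inner_dense {E : Type*} [NormedAddCommGroup E] [InnerProductSpace ℂ E]
    {s : Set E} (hs : (Submodule.span ℂ s).topologicalClosure = ⊤)
    {u v : E} (h : ∀ w ∈ s, ⟪u, w⟫_ℂ = ⟪v, w⟫_ℂ) : u = v := by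
  have : innerSL ℂ u = innerSL ℂ v := clm_ext_dense hs (by simpa using h)
  exact ext_inner_right ℂ fun w => congrFun (congrArg DFunLike.coe this) w

/-- Construction of a unitary sending one spanning family with prescribed inner products
to another. -/
lemma exists_isometryEquiv {K₁ K₂ : Type*}
    [NormedAddCommGroup K₁] [InnerProductSpace ℂ K₁] [CompleteSpace K₁]
    [NormedAddCommGroup K₂] [InnerProductSpace ℂ K₂] [CompleteSpace K₂]
    {ι : Type*} (g₁ : ι → K₁) (g₂ : ι → K₂)
    (hip : ∀ i j, ⟪g₁ i, g₁ j⟫_ℂ = ⟪g₂ i, g₂ j⟫_ℂ)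
    (h₁ : (Submodule.span ℂ (Set.range g₁)).topologicalClosure = ⊤)
    (h₂ : (Submodule.span ℂ (Set.range g₂)).topologicalClosure = ⊤) :
    ∃ U : K₁ ≃ₗᵢ[ℂ] K₂, ∀ i, U (g₁ i) = g₂ i := by
  classical
  set gp : ι → K₁ × K₂ := fun i => (g₁ i, g₂ i) with hgp
  set G : Submodule ℂ (K₁ × K₂) := Submodule.span ℂ (Set.range gp) with hG
  have hinner : ∀ p ∈ G, ∀ q ∈ G, ⟪p.1, q.1⟫_ℂ = ⟪p.2, q.2⟫_ℂ := by
    intro p hp q hq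
    induction hp, hq using Submodule.span_induction₂ with
    | mem_mem x y hx hy =>
      obtain ⟨i, rfl⟩ := hx; obtain ⟨j, rfl⟩ := hy; exact hip i j
    | zero_left y hy => simp
    | zero_right x hx => simp
    | add_left x y z hx hy hz h1 h2 => simp [inner_add_left, h1, h2]
    | add_right x y z hx hy hz h1 h2 => simp [inner_add_right, h1, h2]
    | smul_left r x y hx hy h1 => simp [inner_smul_left, h1]
    | smul_right r x y hx hy h1 => simp [inner_smul_right, h1]
  set S₁ : Submodule ℂ K₁ := Submodule.span ℂ (Set.range g₁) with hS₁
  have hfst : S₁ = G.map (LinearMap.fst ℂ K₁ K₂) := by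
    rw [hS₁, hG, Submodule.map_span]
    congr 1
    ext k
    constructor
    · rintro ⟨i, rfl⟩; exact ⟨gp i, ⟨i, rfl⟩, rfl⟩
    · rintro ⟨p, ⟨i, rfl⟩, rfl⟩; exact ⟨i, rfl⟩
  have hnormzero : ∀ p ∈ G, p.1 = 0 → p.2 = 0 := by
    intro p hp h0
    have := hinner p hp p hp
    rw [h0] at this
    simp only [inner_zero_left] at this
    exact inner_self_eq_zero.mp this.symm
  set φ : G →ₗ[ℂ] K₁ := (LinearMap.fst ℂ K₁ K₂).comp G.subtype with hφ
  have hφmem : ∀ p : G, φ p ∈ S₁ := by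
    intro p
    rw [hfst]
    exact Submodule.mem_map_of_mem p.2
  set φ' : G →ₗ[ℂ] S₁ := φ.codRestrict S₁ hφmem with hφ'
  have hinj : Function.Injective φ' := by
    intro p q hpq
    have h1 : (p : K₁ × K₂).1 = (q : K₁ × K₂).1 := congrArg Subtype.val hpq
    have h2 : ((p : K₁ × K₂) - (q : K₁ × K₂)).1 = 0 := by simp [h1]
    have hmem : (p : K₁ × K₂) - (q : K₁ × K₂) ∈ G := sub_mem p.2 q.2
    have h3 := hnormzero _ hmem h2
    have : (p : K₁ × K₂) = (q : K₁ × K₂) := by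
      have h2' := sub_eq_zero.mp h2
      have h3' := sub_eq_zero.mp (by simpa using h3)
      exact Prod.ext h2' h3'
    exact Subtype.ext this
  have hsurj : Function.Surjective φ' := by
    intro s
    have : (s : K₁) ∈ G.map (LinearMap.fst ℂ K₁ K₂) := hfst ▸ s.2
    obtain ⟨p, hp, hps⟩ := this
    exact ⟨⟨p, hp⟩, Subtype.ext hps⟩
  set e : G ≃ₗ[ℂ] S₁ := LinearEquiv.ofBijective φ' ⟨hinj, hsurj⟩ with he
  have hefst : ∀ s : S₁, ((e.symm s : K₁ × K₂)).1 = (s : K₁) := by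
    intro s
    have : φ' (e.symm s) = s := e.apply_symm_apply s
    exact congrArg Subtype.val this
  set ψ : S₁ →ₗ[ℂ] K₂ :=
    (LinearMap.snd ℂ K₁ K₂).comp (G.subtype.comp e.symm.toLinearMap) with hψdef
  have hψinner : ∀ s t : S₁, ⟪ψ s, ψ t⟫_ℂ = ⟪s, t⟫_ℂ := by
    intro s t
    have := hinner _ (e.symm s).2 _ (e.symm t).2
    rw [hefst s, hefst t] at this
    calc ⟪ψ s, ψ t⟫_ℂ = ⟪((e.symm s : K₁ × K₂)).2, ((e.symm t : K₁ × K₂)).2⟫_ℂ := rfl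
      _ = ⟪(s : K₁), (t : K₁)⟫_ℂ := this.symm
      _ = ⟪s, t⟫_ℂ := rfl
  set Lψ : S₁ →ₗᵢ[ℂ] K₂ := ψ.isometryOfInner hψinner with hLψ
  have hdense : Dense (S₁ : Set K₁) := by
    rw [Submodule.dense_iff_topologicalClosure_eq_top]; exact h₁
  have hdr : DenseRange (S₁.subtypeL : S₁ →L[ℂ] K₁) := hdense.denseRange_val
  have hui : IsUniformInducing (S₁.subtypeL : S₁ →L[ℂ] K₁) :=
    isometry_subtype_coe.isUniformInducing
  set T : K₁ →L[ℂ] K₂ :=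
    ContinuousLinearMap.extend Lψ.toContinuousLinearMap S₁.subtypeL with hT
  have hText : ∀ s : S₁, T (s : K₁) = ψ s :=
    fun s => ContinuousLinearMap.extend_eq (f := Lψ.toContinuousLinearMap) (e := S₁.subtypeL) hdr hui s
  have hTnorm : ∀ k : K₁, ‖T k‖ = ‖k‖ := by
    have : (fun k : K₁ => ‖T k‖) = fun k : K₁ => ‖k‖ := by
      refine hdr.equalizer (continuous_norm.comp T.continuous) continuous_norm ?_
      funext s
      show ‖T ((s : K₁))‖ = ‖(s : K₁)‖
      rw [hText s]
      exact Lψ.norm_map s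
    exact fun k => congrFun this k
  set LT : K₁ →ₗᵢ[ℂ] K₂ := ⟨T.toLinearMap, hTnorm⟩ with hLT
  have hTg : ∀ i, T (g₁ i) = g₂ i := by
    intro i
    have hm : g₁ i ∈ S₁ := Submodule.subset_span ⟨i, rfl⟩
    have h1 : T (g₁ i) = ψ ⟨g₁ i, hm⟩ := hText ⟨g₁ i, hm⟩
    have hpm : gp i ∈ G := Submodule.subset_span ⟨i, rfl⟩
    have h2 : e.symm ⟨g₁ i, hm⟩ = ⟨gp i, hpm⟩ := by
      rw [LinearEquiv.symm_apply_eq]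
      exact Subtype.ext rfl
    rw [h1, hψdef]
    simp only [LinearMap.comp_apply, LinearEquiv.coe_toLinearMap]
    rw [h2]
    rfl
  have hTsurj : Function.Surjective LT := by
    have hclosed : IsClosed (Set.range LT) :=
      (LT.isometry.isClosedEmbedding).isClosed_range
    have hsub : (Submodule.span ℂ (Set.range g₂) : Set K₂) ⊆ Set.range LT := by
      have : Submodule.span ℂ (Set.range g₂) ≤ LinearMap.range LT.toLinearMap := by
        rw [Submodule.span_le]
        rintro w ⟨i, rfl⟩
        exact ⟨g₁ i, hTg i⟩
      intro w hw
      exact this hw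
    intro w
    have hw : w ∈ closure (Submodule.span ℂ (Set.range g₂) : Set K₂) := by
      rw [← Submodule.topologicalClosure_coe, h₂]
      trivial
    have := (hclosed.closure_subset_iff.mpr hsub) hw
    exact this
  refine ⟨LinearIsometryEquiv.ofSurjective LT hTsurj, fun i => ?_⟩
  rw [show (LinearIsometryEquiv.ofSurjective LT hTsurj) (g₁ i) = LT (g₁ i) from
    congrFun (LinearIsometryEquiv.coe_ofSurjective LT hTsurj) (g₁ i)]
  exact hTg i

set_option maxHeartbeats 1000000 in
/-- uniqueness, up to unitary equivalence, of the minimal Stinespring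
construction for a completely positive map `Φ` on a full Hilbert `A`-module. -/
theorem stmt_12
    {A : Type*} [NormedRing A] [StarRing A] [CStarRing A] [NormedAlgebra ℂ A]
    [CompleteSpace A] [StarModule ℂ A]
    {H K H₁ K₁ H₂ K₂ : Type*}
    [NormedAddCommGroup H] [InnerProductSpace ℂ H] [CompleteSpace H]
    [NormedAddCommGroup K] [InnerProductSpace ℂ K] [CompleteSpace K]
    [NormedAddCommGroup H₁] [InnerProductSpace ℂ H₁] [CompleteSpace H₁]
    [NormedAddCommGroup K₁] [InnerProductSpace ℂ K₁] [CompleteSpace K₁]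
    [NormedAddCommGroup H₂] [InnerProductSpace ℂ H₂] [CompleteSpace H₂]
    [NormedAddCommGroup K₂] [InnerProductSpace ℂ K₂] [CompleteSpace K₂]
    {X : Type*} (E : X → X → A)
    (hfull : (Submodule.span ℂ {a : A | ∃ x y, a = E x y}).topologicalClosure = ⊤)
    (Φ : X → H →L[ℂ] K)
    (π₁ : X → H₁ →L[ℂ] K₁) (ρ₁ : A →⋆ₐ[ℂ] (H₁ →L[ℂ] H₁))
    (hrep₁ : ∀ x y, adjoint (π₁ x) ∘L π₁ y = ρ₁ (E x y))
    (π₂ : X → H₂ →L[ℂ] K₂) (ρ₂ : A →⋆ₐ[ℂ] (H₂ →L[ℂ] H₂))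
    (hrep₂ : ∀ x y, adjoint (π₂ x) ∘L π₂ y = ρ₂ (E x y))
    (V₁ : H →L[ℂ] H₁) (W₁ : K →L[ℂ] K₁) (hW₁ : W₁ ∘L adjoint W₁ = 1)
    (V₂ : H →L[ℂ] H₂) (W₂ : K →L[ℂ] K₂) (hW₂ : W₂ ∘L adjoint W₂ = 1)
    (hΦ₁ : ∀ x, Φ x = adjoint W₁ ∘L π₁ x ∘L V₁)
    (hΦ₂ : ∀ x, Φ x = adjoint W₂ ∘L π₂ x ∘L V₂)
    (hd₁ : (Submodule.span ℂ {k : K₁ | ∃ x h, k = π₁ x (V₁ h)}).topologicalClosure = ⊤)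
    (hd₂ : (Submodule.span ℂ {k : K₂ | ∃ x h, k = π₂ x (V₂ h)}).topologicalClosure = ⊤)
    (he₁ : (Submodule.span ℂ {h : H₁ | ∃ x k, h = adjoint (π₁ x) (W₁ k)}).topologicalClosure = ⊤)
    (he₂ : (Submodule.span ℂ {h : H₂ | ∃ x k, h = adjoint (π₂ x) (W₂ k)}).topologicalClosure = ⊤) :
    ∃ (U₁ : H₁ ≃ₗᵢ[ℂ] H₂) (U₂ : K₁ ≃ₗᵢ[ℂ] K₂),
      (∀ x h, U₂ (π₁ x h) = π₂ x (U₁ h)) ∧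
        (∀ h, U₁ (V₁ h) = V₂ h) ∧ ∀ k, U₂ (W₁ k) = W₂ k := by
  classical
  have hρc₁ : Continuous ρ₁ := by
    letI : CStarAlgebra A := {}
    letI : CStarAlgebra (H₁ →L[ℂ] H₁) := {}
    exact AddMonoidHomClass.continuous_of_bound ρ₁ 1
      (fun a => by simpa [one_mul] using NonUnitalStarAlgHom.norm_apply_le ρ₁ a)
  have hρc₂ : Continuous ρ₂ := by
    letI : CStarAlgebra A := {}
    letI : CStarAlgebra (H₂ →L[ℂ] H₂) := {}
    exact AddMonoidHomClass.continuous_of_bound ρ₂ 1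
      (fun a => by simpa [one_mul] using NonUnitalStarAlgHom.norm_apply_le ρ₂ a)
  -- base cases of Lemma A
  have baseA₁ : ∀ x y, adjoint V₁ ∘L (ρ₁ (E x y) ∘L V₁) = adjoint (Φ x) ∘L Φ y := by
    intro x y
    rw [← hrep₁ x y, hΦ₁ x, hΦ₁ y]
    simp only [adjoint_comp, adjoint_adjoint, comp_assoc]
    rw [← comp_assoc W₁ (adjoint W₁) (π₁ y ∘L V₁), hW₁, one_def, id_comp]
  have baseA₂ : ∀ x y, adjoint V₂ ∘L (ρ₂ (E x y) ∘L V₂) = adjoint (Φ x) ∘L Φ y := by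
    intro x y
    rw [← hrep₂ x y, hΦ₂ x, hΦ₂ y]
    simp only [adjoint_comp, adjoint_adjoint, comp_assoc]
    rw [← comp_assoc W₂ (adjoint W₂) (π₂ y ∘L V₂), hW₂, one_def, id_comp]
  -- Lemma A, operator form
  have lemAop : ∀ a : A, adjoint V₁ ∘L (ρ₁ a ∘L V₁) = adjoint V₂ ∘L (ρ₂ a ∘L V₂) := by
    set D : Submodule ℂ A :=
      { carrier := {a : A | adjoint V₁ ∘L (ρ₁ a ∘L V₁) = adjoint V₂ ∘L (ρ₂ a ∘L V₂)}
        add_mem' := by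
          intro a b ha hb
          simp only [Set.mem_setOf_eq] at *
          simp only [map_add, add_comp, comp_add, ha, hb]
        zero_mem' := by simp
        smul_mem' := by
          intro c a ha
          simp only [Set.mem_setOf_eq] at *
          simp only [map_smul, smul_comp, comp_smul, ha] } with hD
    have hsub : {a : A | ∃ x y, a = E x y} ⊆ (D : Set A) := by
      rintro _ ⟨x, y, rfl⟩
      show adjoint V₁ ∘L (ρ₁ (E x y) ∘L V₁) = adjoint V₂ ∘L (ρ₂ (E x y) ∘L V₂)
      rw [baseA₁, baseA₂]
    have hclosedD : IsClosed (D : Set A) := by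
      apply isClosed_eq
      · exact continuous_const.clm_comp (hρc₁.clm_comp continuous_const)
      · exact continuous_const.clm_comp (hρc₂.clm_comp continuous_const)
    have hle := Submodule.topologicalClosure_minimal _ (Submodule.span_le.mpr hsub) hclosedD
    rw [hfull] at hle
    exact fun a => hle Submodule.mem_top
  -- Lemma A, pointwise
  have lemA : ∀ (a : A) (h h' : H), ⟪V₁ h, ρ₁ a (V₁ h')⟫_ℂ = ⟪V₂ h, ρ₂ a (V₂ h')⟫_ℂ := by
    intro a h h'
    have h1 : ⟪V₁ h, ρ₁ a (V₁ h')⟫_ℂ = ⟪h, (adjoint V₁ ∘L (ρ₁ a ∘L V₁)) h'⟫_ℂ := by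
      simp only [comp_apply, adjoint_inner_right]
    have h2 : ⟪V₂ h, ρ₂ a (V₂ h')⟫_ℂ = ⟪h, (adjoint V₂ ∘L (ρ₂ a ∘L V₂)) h'⟫_ℂ := by
      simp only [comp_apply, adjoint_inner_right]
    rw [h1, h2, lemAop a]
  -- generators of K₁, K₂
  set g1K : X × H → K₁ := fun p => π₁ p.1 (V₁ p.2) with hg1K
  set g2K : X × H → K₂ := fun p => π₂ p.1 (V₂ p.2) with hg2K
  have hr1K : Set.range g1K = {k : K₁ | ∃ x h, k = π₁ x (V₁ h)} := by
    ext k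
    constructor
    · rintro ⟨⟨x, h⟩, rfl⟩; exact ⟨x, h, rfl⟩
    · rintro ⟨x, h, rfl⟩; exact ⟨(x, h), rfl⟩
  have hr2K : Set.range g2K = {k : K₂ | ∃ x h, k = π₂ x (V₂ h)} := by
    ext k
    constructor
    · rintro ⟨⟨x, h⟩, rfl⟩; exact ⟨x, h, rfl⟩
    · rintro ⟨x, h, rfl⟩; exact ⟨(x, h), rfl⟩
  have hipK : ∀ p q : X × H, ⟪g1K p, g1K q⟫_ℂ = ⟪g2K p, g2K q⟫_ℂ := by
    rintro ⟨x, h⟩ ⟨y, h'⟩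
    have e1 : ⟪π₁ x (V₁ h), π₁ y (V₁ h')⟫_ℂ = ⟪V₁ h, ρ₁ (E x y) (V₁ h')⟫_ℂ := by
      calc ⟪π₁ x (V₁ h), π₁ y (V₁ h')⟫_ℂ
          = ⟪V₁ h, adjoint (π₁ x) (π₁ y (V₁ h'))⟫_ℂ := (adjoint_inner_right _ _ _).symm
        _ = ⟪V₁ h, (adjoint (π₁ x) ∘L π₁ y) (V₁ h')⟫_ℂ := rfl
        _ = ⟪V₁ h, ρ₁ (E x y) (V₁ h')⟫_ℂ := by rw [hrep₁]
    have e2 : ⟪π₂ x (V₂ h), π₂ y (V₂ h')⟫_ℂ = ⟪V₂ h, ρ₂ (E x y) (V₂ h')⟫_ℂ := by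
      calc ⟪π₂ x (V₂ h), π₂ y (V₂ h')⟫_ℂ
          = ⟪V₂ h, adjoint (π₂ x) (π₂ y (V₂ h'))⟫_ℂ := (adjoint_inner_right _ _ _).symm
        _ = ⟪V₂ h, (adjoint (π₂ x) ∘L π₂ y) (V₂ h')⟫_ℂ := rfl
        _ = ⟪V₂ h, ρ₂ (E x y) (V₂ h')⟫_ℂ := by rw [hrep₂]
    show ⟪π₁ x (V₁ h), π₁ y (V₁ h')⟫_ℂ = ⟪π₂ x (V₂ h), π₂ y (V₂ h')⟫_ℂ
    rw [e1, e2]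
    exact lemA _ _ _
  obtain ⟨U₂, hU₂⟩ := exists_isometryEquiv g1K g2K hipK
    (by rw [hr1K]; exact hd₁) (by rw [hr2K]; exact hd₂)
  have hU₂' : ∀ (x : X) (h : H), U₂ (π₁ x (V₁ h)) = π₂ x (V₂ h) := fun x h => hU₂ (x, h)
  -- U₂ ∘ W₁ = W₂
  have hUW : ∀ k, U₂ (W₁ k) = W₂ k := by
    intro k
    refine ext_inner_dense hd₂ ?_
    rintro w ⟨x, h, rfl⟩
    have l : ⟪U₂ (W₁ k), π₂ x (V₂ h)⟫_ℂ = ⟪k, Φ x h⟫_ℂ := by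
      rw [← hU₂' x h, LinearIsometryEquiv.inner_map_map, hΦ₁ x]
      show ⟪W₁ k, π₁ x (V₁ h)⟫_ℂ = ⟪k, adjoint W₁ (π₁ x (V₁ h))⟫_ℂ
      exact (adjoint_inner_right _ _ _).symm
    have r : ⟪W₂ k, π₂ x (V₂ h)⟫_ℂ = ⟪k, Φ x h⟫_ℂ := by
      rw [hΦ₂ x]
      show ⟪W₂ k, π₂ x (V₂ h)⟫_ℂ = ⟪k, adjoint W₂ (π₂ x (V₂ h))⟫_ℂ
      exact (adjoint_inner_right _ _ _).symm
    rw [l, r]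
  -- key computation with ρ
  have hQ : ∀ (a : A) (x : X) (h : H), U₂ (π₁ x (ρ₁ a (V₁ h))) = π₂ x (ρ₂ a (V₂ h)) := by
    intro a x h
    refine ext_inner_dense hd₂ ?_
    rintro w ⟨w', h', rfl⟩
    have l : ⟪U₂ (π₁ x (ρ₁ a (V₁ h))), π₂ w' (V₂ h')⟫_ℂ
        = ⟪V₁ h, ρ₁ (star a * E x w') (V₁ h')⟫_ℂ := by
      rw [← hU₂' w' h', LinearIsometryEquiv.inner_map_map]
      calc ⟪π₁ x (ρ₁ a (V₁ h)), π₁ w' (V₁ h')⟫_ℂ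
          = ⟪ρ₁ a (V₁ h), adjoint (π₁ x) (π₁ w' (V₁ h'))⟫_ℂ := (adjoint_inner_right _ _ _).symm
        _ = ⟪ρ₁ a (V₁ h), ρ₁ (E x w') (V₁ h')⟫_ℂ := by
            rw [show adjoint (π₁ x) (π₁ w' (V₁ h'))
                = (adjoint (π₁ x) ∘L π₁ w') (V₁ h') from rfl, hrep₁]
        _ = ⟪V₁ h, adjoint (ρ₁ a) (ρ₁ (E x w') (V₁ h'))⟫_ℂ := (adjoint_inner_right _ _ _).symm
        _ = ⟪V₁ h, ρ₁ (star a * E x w') (V₁ h')⟫_ℂ := by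
            rw [← star_eq_adjoint, ← map_star, ← ContinuousLinearMap.mul_apply, ← map_mul]
    have r : ⟪π₂ x (ρ₂ a (V₂ h)), π₂ w' (V₂ h')⟫_ℂ
        = ⟪V₂ h, ρ₂ (star a * E x w') (V₂ h')⟫_ℂ := by
      calc ⟪π₂ x (ρ₂ a (V₂ h)), π₂ w' (V₂ h')⟫_ℂ
          = ⟪ρ₂ a (V₂ h), adjoint (π₂ x) (π₂ w' (V₂ h'))⟫_ℂ := (adjoint_inner_right _ _ _).symm
        _ = ⟪ρ₂ a (V₂ h), ρ₂ (E x w') (V₂ h')⟫_ℂ := by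
            rw [show adjoint (π₂ x) (π₂ w' (V₂ h'))
                = (adjoint (π₂ x) ∘L π₂ w') (V₂ h') from rfl, hrep₂]
        _ = ⟪V₂ h, adjoint (ρ₂ a) (ρ₂ (E x w') (V₂ h'))⟫_ℂ := (adjoint_inner_right _ _ _).symm
        _ = ⟪V₂ h, ρ₂ (star a * E x w') (V₂ h')⟫_ℂ := by
            rw [← star_eq_adjoint, ← map_star, ← ContinuousLinearMap.mul_apply, ← map_mul]
    rw [l, r]
    exact lemA _ _ _
  set U₂L : K₁ →L[ℂ] K₂ := U₂.toLinearIsometry.toContinuousLinearMap with hU₂L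
  have hU₂Lapp : ∀ w : K₁, U₂L w = U₂ w := fun w => rfl
  -- intertwining of π(x)π(y)*
  have hP : ∀ (x y : X) (w : K₁),
      U₂ (π₁ x (adjoint (π₁ y) w)) = π₂ x (adjoint (π₂ y) (U₂ w)) := by
    intro x y
    have hops : U₂L ∘L (π₁ x ∘L adjoint (π₁ y)) = (π₂ x ∘L adjoint (π₂ y)) ∘L U₂L := by
      refine clm_ext_dense hd₁ ?_
      rintro w ⟨z, h, rfl⟩
      show U₂ (π₁ x (adjoint (π₁ y) (π₁ z (V₁ h)))) = π₂ x (adjoint (π₂ y) (U₂ (π₁ z (V₁ h))))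
      rw [hU₂' z h]
      rw [show adjoint (π₁ y) (π₁ z (V₁ h)) = ρ₁ (E y z) (V₁ h) from by
        rw [show adjoint (π₁ y) (π₁ z (V₁ h)) = (adjoint (π₁ y) ∘L π₁ z) (V₁ h) from rfl, hrep₁]]
      rw [show adjoint (π₂ y) (π₂ z (V₂ h)) = ρ₂ (E y z) (V₂ h) from by
        rw [show adjoint (π₂ y) (π₂ z (V₂ h)) = (adjoint (π₂ y) ∘L π₂ z) (V₂ h) from rfl, hrep₂]]
      exact hQ (E y z) x h
    intro w
    have := ContinuousLinearMap.ext_iff.mp hops w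
    exact this
  -- generators of H₁, H₂
  set g1H : X × K → H₁ := fun p => adjoint (π₁ p.1) (W₁ p.2) with hg1H
  set g2H : X × K → H₂ := fun p => adjoint (π₂ p.1) (W₂ p.2) with hg2H
  have hr1H : Set.range g1H = {h : H₁ | ∃ x k, h = adjoint (π₁ x) (W₁ k)} := by
    ext h
    constructor
    · rintro ⟨⟨x, k⟩, rfl⟩; exact ⟨x, k, rfl⟩
    · rintro ⟨x, k, rfl⟩; exact ⟨(x, k), rfl⟩
  have hr2H : Set.range g2H = {h : H₂ | ∃ x k, h = adjoint (π₂ x) (W₂ k)} := by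
    ext h
    constructor
    · rintro ⟨⟨x, k⟩, rfl⟩; exact ⟨x, k, rfl⟩
    · rintro ⟨x, k, rfl⟩; exact ⟨(x, k), rfl⟩
  have hipH : ∀ p q : X × K, ⟪g1H p, g1H q⟫_ℂ = ⟪g2H p, g2H q⟫_ℂ := by
    rintro ⟨x, k⟩ ⟨y, k'⟩
    show ⟪adjoint (π₁ x) (W₁ k), adjoint (π₁ y) (W₁ k')⟫_ℂ
        = ⟪adjoint (π₂ x) (W₂ k), adjoint (π₂ y) (W₂ k')⟫_ℂ
    calc ⟪adjoint (π₁ x) (W₁ k), adjoint (π₁ y) (W₁ k')⟫_ℂ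
        = ⟪W₁ k, π₁ x (adjoint (π₁ y) (W₁ k'))⟫_ℂ := adjoint_inner_left _ _ _
      _ = ⟪U₂ (W₁ k), U₂ (π₁ x (adjoint (π₁ y) (W₁ k')))⟫_ℂ :=
          (LinearIsometryEquiv.inner_map_map _ _ _).symm
      _ = ⟪W₂ k, π₂ x (adjoint (π₂ y) (U₂ (W₁ k')))⟫_ℂ := by rw [hUW k, hP x y (W₁ k')]
      _ = ⟪W₂ k, π₂ x (adjoint (π₂ y) (W₂ k'))⟫_ℂ := by rw [hUW k']
      _ = ⟪adjoint (π₂ x) (W₂ k), adjoint (π₂ y) (W₂ k')⟫_ℂ := (adjoint_inner_left _ _ _).symm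
  obtain ⟨U₁, hU₁⟩ := exists_isometryEquiv g1H g2H hipH
    (by rw [hr1H]; exact he₁) (by rw [hr2H]; exact he₂)
  have hU₁' : ∀ (x : X) (k : K), U₁ (adjoint (π₁ x) (W₁ k)) = adjoint (π₂ x) (W₂ k) :=
    fun x k => hU₁ (x, k)
  set U₁L : H₁ →L[ℂ] H₂ := U₁.toLinearIsometry.toContinuousLinearMap with hU₁L
  -- intertwining
  have hint : ∀ (x : X) (h : H₁), U₂ (π₁ x h) = π₂ x (U₁ h) := by
    intro x
    have hops : U₂L ∘L π₁ x = π₂ x ∘L U₁L := by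
      refine clm_ext_dense he₁ ?_
      rintro w ⟨y, k, rfl⟩
      show U₂ (π₁ x (adjoint (π₁ y) (W₁ k))) = π₂ x (U₁ (adjoint (π₁ y) (W₁ k)))
      rw [hP x y (W₁ k), hUW k, hU₁' y k]
    intro h
    have := ContinuousLinearMap.ext_iff.mp hops h
    exact this
  -- U₁ ∘ V₁ = V₂
  have hV : ∀ h, U₁ (V₁ h) = V₂ h := by
    intro h
    refine ext_inner_dense he₂ ?_
    rintro w ⟨x, k, rfl⟩
    have l : ⟪U₁ (V₁ h), adjoint (π₂ x) (W₂ k)⟫_ℂ = ⟪Φ x h, k⟫_ℂ := by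
      rw [← hU₁' x k, LinearIsometryEquiv.inner_map_map]
      calc ⟪V₁ h, adjoint (π₁ x) (W₁ k)⟫_ℂ
          = ⟪π₁ x (V₁ h), W₁ k⟫_ℂ := adjoint_inner_right _ _ _
        _ = ⟪adjoint W₁ (π₁ x (V₁ h)), k⟫_ℂ := (adjoint_inner_left _ _ _).symm
        _ = ⟪Φ x h, k⟫_ℂ := by rw [hΦ₁ x]; rfl
    have r : ⟪V₂ h, adjoint (π₂ x) (W₂ k)⟫_ℂ = ⟪Φ x h, k⟫_ℂ := by
      calc ⟪V₂ h, adjoint (π₂ x) (W₂ k)⟫_ℂ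
          = ⟪π₂ x (V₂ h), W₂ k⟫_ℂ := adjoint_inner_right _ _ _
        _ = ⟪adjoint W₂ (π₂ x (V₂ h)), k⟫_ℂ := (adjoint_inner_left _ _ _).symm
        _ = ⟪Φ x h, k⟫_ℂ := by rw [hΦ₂ x]; rfl
    rw [l, r]
  exact ⟨U₁, U₂, hint, hV, hUW⟩
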